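/- Let p : ℝ → [0,∞) be an integrable even function that is nonincreasing on [0,∞) (unimodal with mode 0) and bounded. Then ∫_ℝ |p(x+y) - p(x)| dx ≤ 4 |y| · ‖p‖_∞ for every y ∈ ℝ. -/

import Mathlib

open MeasureTheory

lemma unimodal_aux (p : ℝ → ℝ)
    (hint : Integrable p) (hnn : ∀ x, 0 ≤ p x)
    (heven : ∀ x, p (-x) = p x) (hmono : AntitoneOn p (Set.Ici 0))
    (M : ℝ) (hM : ∀ x, p x ≤ M) (y : ℝ) (hy : 0 ≤ y) :
    ∫ x, |p (x + y) - p x| ≤ 2 * y * M := by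
  set c : ℝ := -(y/2) with hc
  have habs : ∀ t : ℝ, p t = p |t| := by
    intro t
    rcases abs_cases t with ⟨h, _⟩ | ⟨h, _⟩
    · rw [h]
    · rw [h, heven]
  have hcomp : ∀ a b : ℝ, |a| ≤ |b| → p b ≤ p a := by
    intro a b hab
    rw [habs a, habs b]
    exact hmono (abs_nonneg a) (abs_nonneg b) hab
  -- sign analysis
  have sign1 : ∀ x ∈ Set.Iic c, p x ≤ p (x + y) := by
    intro x hx
    simp only [Set.mem_Iic, hc] at hx
    refine hcomp (x + y) x ?_
    have hx0 : x ≤ 0 := by linarith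
    rw [abs_of_nonpos hx0, abs_le]
    constructor <;> linarith
  have sign2 : ∀ x ∈ Set.Ioi c, p (x + y) ≤ p x := by
    intro x hx
    simp only [Set.mem_Ioi, hc] at hx
    refine hcomp x (x + y) ?_
    have hxy0 : (0:ℝ) ≤ x + y := by linarith
    rw [abs_of_nonneg hxy0, abs_le]
    constructor <;> linarith
  -- integrability
  have ht : Integrable (fun x => p (x + y)) := hint.comp_add_right y
  have hd : Integrable (fun x => p (x + y) - p x) := ht.sub hint
  have hda : Integrable (fun x => |p (x + y) - p x|) := hd.abs
  -- translation identity for set integrals over Iic and Ioi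
  have keyIic : ∀ b : ℝ, ∫ x in Set.Iic b, p (x + y) = ∫ x in Set.Iic (b + y), p x := by
    intro b
    rw [← integral_indicator measurableSet_Iic, ← integral_indicator measurableSet_Iic]
    have heq : (fun x => (Set.Iic b).indicator (fun x => p (x + y)) x)
        = fun x => (Set.Iic (b + y)).indicator p (x + y) := by
      funext x
      by_cases h : x ≤ b
      · rw [Set.indicator_of_mem (Set.mem_Iic.2 h),
          Set.indicator_of_mem (Set.mem_Iic.2 (by linarith))]
      · rw [Set.indicator_of_notMem (fun hx => h (Set.mem_Iic.1 hx)),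
          Set.indicator_of_notMem (fun hx => h (by simpa using Set.mem_Iic.1 hx |>.trans (le_refl _) |> fun h' => by linarith))]
    rw [heq]
    exact integral_add_right_eq_self ((Set.Iic (b + y)).indicator p) y
  have keyIoi : ∀ b : ℝ, ∫ x in Set.Ioi b, p (x + y) = ∫ x in Set.Ioi (b + y), p x := by
    intro b
    rw [← integral_indicator measurableSet_Ioi, ← integral_indicator measurableSet_Ioi]
    have heq : (fun x => (Set.Ioi b).indicator (fun x => p (x + y)) x)
        = fun x => (Set.Ioi (b + y)).indicator p (x + y) := by
      funext x
      by_cases h : b < x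
      · rw [Set.indicator_of_mem (Set.mem_Ioi.2 h),
          Set.indicator_of_mem (Set.mem_Ioi.2 (by linarith))]
      · rw [Set.indicator_of_notMem (fun hx => h (Set.mem_Ioi.1 hx)),
          Set.indicator_of_notMem (fun hx => h (by have := Set.mem_Ioi.1 hx; linarith))]
    rw [heq]
    exact integral_add_right_eq_self ((Set.Ioi (b + y)).indicator p) y
  -- bound on middle strip
  have hM0 : 0 ≤ M := (hnn 0).trans (hM 0)
  have strip : ∫ x in Set.Ioc c (c + y), p x ≤ y * M := by
    have h1 : ∫ x in Set.Ioc c (c + y), p x ≤ ∫ _x in Set.Ioc c (c + y), M := by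
      refine setIntegral_mono_on hint.integrableOn
        (integrableOn_const (by simp) (by simp)) measurableSet_Ioc (fun x _ => hM x)
    have h2 : ∫ _x in Set.Ioc c (c + y), M = y * M := by
      rw [setIntegral_const]
      simp [Real.volume_Ioc, ENNReal.toReal_ofReal hy, smul_eq_mul, hy]
    linarith
  -- split the integral
  rw [← intervalIntegral.integral_Iic_add_Ioi (b := c) hda.integrableOn hda.integrableOn]
  -- left part
  have hleft : ∫ x in Set.Iic c, |p (x + y) - p x| ≤ y * M := by
    have e1 : ∫ x in Set.Iic c, |p (x + y) - p x| = ∫ x in Set.Iic c, (p (x + y) - p x) := by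
      refine setIntegral_congr_fun measurableSet_Iic (fun x hx => ?_)
      exact abs_of_nonneg (sub_nonneg.2 (sign1 x hx))
    have e2 : ∫ x in Set.Iic c, (p (x + y) - p x)
        = (∫ x in Set.Iic c, p (x + y)) - ∫ x in Set.Iic c, p x :=
      integral_sub ht.integrableOn hint.integrableOn
    have e3 : (∫ x in Set.Iic (c + y), p x) - ∫ x in Set.Iic c, p x
        = ∫ x in Set.Ioc c (c + y), p x := by
      rw [intervalIntegral.integral_Iic_sub_Iic hint.integrableOn hint.integrableOn,
        intervalIntegral.integral_of_le (by linarith)]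
    rw [e1, e2, keyIic c, e3]
    exact strip
  -- right part
  have hright : ∫ x in Set.Ioi c, |p (x + y) - p x| ≤ y * M := by
    have e1 : ∫ x in Set.Ioi c, |p (x + y) - p x| = ∫ x in Set.Ioi c, (p x - p (x + y)) := by
      refine setIntegral_congr_fun measurableSet_Ioi (fun x hx => ?_)
      rw [abs_sub_comm]
      exact abs_of_nonneg (sub_nonneg.2 (sign2 x hx))
    have e2 : ∫ x in Set.Ioi c, (p x - p (x + y))
        = (∫ x in Set.Ioi c, p x) - ∫ x in Set.Ioi c, p (x + y) :=
      integral_sub hint.integrableOn ht.integrableOn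
    have e4 : ∫ x in Set.Ioi c, p x
        = (∫ x in Set.Ioc c (c + y), p x) + ∫ x in Set.Ioi (c + y), p x := by
      rw [← setIntegral_union (Set.Ioc_disjoint_Ioi le_rfl) measurableSet_Ioi
        hint.integrableOn hint.integrableOn,
        Set.Ioc_union_Ioi_eq_Ioi (by linarith)]
    rw [e1, e2, keyIoi c, e4]
    linarith [strip]
  linarith

/-- If `p : ℝ → [0,∞)` is integrable, even, nonincreasing on `[0,∞)` and bounded by `M`, then
`∫ |p(x+y) - p(x)| dx ≤ 4 |y| M` for every `y`. -/
theorem unimodal_translation_L1_estimate (p : ℝ → ℝ)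
    (hint : Integrable p) (hnn : ∀ x, 0 ≤ p x)
    (heven : ∀ x, p (-x) = p x) (hmono : AntitoneOn p (Set.Ici 0))
    (M : ℝ) (hM : ∀ x, p x ≤ M) (y : ℝ) :
    ∫ x, |p (x + y) - p x| ≤ 4 * |y| * M := by
  have hM0 : 0 ≤ M := (hnn 0).trans (hM 0)
  rcases le_or_gt 0 y with hy | hy
  · have h := unimodal_aux p hint hnn heven hmono M hM y hy
    have : 2 * y * M ≤ 4 * |y| * M := by
      rw [abs_of_nonneg hy]
      nlinarith
    linarith
  · have h := unimodal_aux p hint hnn heven hmono M hM (-y) (by linarith)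
    have e : ∫ x, |p (x + y) - p x| = ∫ x, |p (x + -y) - p x| := by
      have := integral_add_right_eq_self (μ := volume) (fun u => |p (u + -y) - p u|) y
      rw [← this]
      congr 1
      funext x
      rw [abs_sub_comm]
      ring_nf
    rw [e]
    have : 2 * (-y) * M ≤ 4 * |y| * M := by
      rw [abs_of_neg hy]
      nlinarith
    linarith
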